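/- arXiv:1904.10953 — 6 statements merged into one kernel-verified Lean document; each statement's English description precedes it below -/
import Mathlib

section
/- The mixing condition lim_{j→∞} e_{i,j} = 0 for every fixed i holds if and only if ∑_n min(p_n, 1 - p_n) = ∞. -/
open Filter Finset

private lemma prod_one_sub_ge (f : ℕ → ℝ) (hf : ∀ n, 0 ≤ f n ∧ f n ≤ 1)
    (s : Finset ℕ) : 1 - ∑ k ∈ s, f k ≤ ∏ k ∈ s, (1 - f k) := by
  classical
  induction s using Finset.induction_on with
  | empty => simp
  | @insert a s hx ih =>
    rw [Finset.prod_insert hx, Finset.sum_insert hx]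
    have h1 : 0 ≤ 1 - f a := by linarith [(hf a).2]
    have h2 : 0 ≤ ∑ k ∈ s, f k := Finset.sum_nonneg fun k _ => (hf k).1
    nlinarith [(hf a).1]

private lemma abs_one_sub_two_mul (p : ℝ) (hp : p ∈ Set.Icc (0:ℝ) 1) :
    |1 - 2 * p| = 1 - 2 * min p (1 - p) := by
  obtain ⟨h0, h1⟩ := hp
  rcases le_total p (1 - p) with h | h
  · rw [min_eq_left h, abs_of_nonneg (by linarith)]
  · rw [min_eq_right h, abs_of_nonpos (by linarith)]; ring

/-- The mixing condition `lim_{j→∞} e_{i,j} = 0` for every fixed `i` holds if and only if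
`∑_n min(p_n, 1 - p_n) = ∞` (i.e. the series is not summable), where
`e_{i,j} = ∏_{k=i+1}^j (1 - 2 p_k)`. -/
theorem mixing_iff_sum_min_diverges
    (p : ℕ → ℝ) (hp : ∀ n, p n ∈ Set.Icc (0 : ℝ) 1) :
    (∀ i : ℕ, Tendsto (fun j => ∏ k ∈ Finset.Icc (i + 1) j, (1 - 2 * p k)) atTop (nhds 0))
      ↔ ¬ Summable (fun n => min (p n) (1 - p n)) := by
  set m : ℕ → ℝ := fun n => min (p n) (1 - p n) with hm
  have hm0 : ∀ n, 0 ≤ m n := fun n => le_min (hp n).1 (by linarith [(hp n).2])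
  have hm1 : ∀ n, m n ≤ 1/2 := fun n => by
    rcases le_total (p n) (1 - p n) with h | h
    · rw [hm]; simp only [min_eq_left h]; linarith
    · rw [hm]; simp only [min_eq_right h]; linarith
  have habs : ∀ i j, |∏ k ∈ Finset.Icc (i + 1) j, (1 - 2 * p k)|
      = ∏ k ∈ Finset.Icc (i + 1) j, (1 - 2 * m k) := by
    intro i j
    rw [Finset.abs_prod]
    exact Finset.prod_congr rfl fun k _ => abs_one_sub_two_mul (p k) (hp k)
  constructor
  · -- mixing ⇒ not summable
    intro hmix hsum
    obtain ⟨s, hs⟩ := summable_iff_vanishing_norm.mp hsum (1/4) (by norm_num)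
    set N : ℕ := s.sup id with hN
    have hdisj : ∀ j, Disjoint (Finset.Icc (N + 1) j) s := by
      intro j
      refine Finset.disjoint_left.mpr fun a ha has => ?_
      have : a ≤ N := Finset.le_sup (f := id) has
      have : N + 1 ≤ a := (Finset.mem_Icc.mp ha).1
      omega
    have hlb : ∀ j, (1:ℝ)/2 ≤ ∏ k ∈ Finset.Icc (N + 1) j, (1 - 2 * m k) := by
      intro j
      have h1 := prod_one_sub_ge (fun n => 2 * m n)
        (fun n => ⟨by linarith [hm0 n], by linarith [hm1 n]⟩)
        (Finset.Icc (N + 1) j)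
      have h2 := hs _ (hdisj j)
      rw [Real.norm_eq_abs, abs_of_nonneg (Finset.sum_nonneg fun k _ => hm0 k)] at h2
      have : ∑ k ∈ Finset.Icc (N + 1) j, 2 * m k
          = 2 * ∑ k ∈ Finset.Icc (N + 1) j, m k := by rw [Finset.mul_sum]
      rw [this] at h1
      linarith
    have := (hmix N).abs
    rw [abs_zero] at this
    have := this.eventually (eventually_lt_nhds (show (0:ℝ) < 1/2 by norm_num))
    obtain ⟨j, hj⟩ := this.exists
    rw [habs] at hj
    linarith [hlb j]
  · -- not summable ⇒ mixing
    intro hdiv i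
    have h0 := (not_summable_iff_tendsto_nat_atTop_of_nonneg hm0).mp hdiv
    have hT : Tendsto (fun j => ∑ k ∈ Finset.Icc (i + 1) j, m k) atTop atTop := by
      have h1 : Tendsto (fun j : ℕ => ∑ k ∈ Finset.range (j + 1), m k
          - ∑ k ∈ Finset.range (i + 1), m k) atTop atTop :=
        tendsto_atTop_add_const_right _ _ (h0.comp (tendsto_add_atTop_nat 1))
      refine h1.congr' ?_
      filter_upwards [eventually_ge_atTop i] with j hj
      rw [← Finset.Ico_add_one_right_eq_Icc, Finset.sum_Ico_eq_sub _ (by omega : i + 1 ≤ j + 1)]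
    have hbound : ∀ j, ‖∏ k ∈ Finset.Icc (i + 1) j, (1 - 2 * p k)‖
        ≤ Real.exp (-(2 * ∑ k ∈ Finset.Icc (i + 1) j, m k)) := by
      intro j
      rw [Real.norm_eq_abs, habs]
      calc ∏ k ∈ Finset.Icc (i + 1) j, (1 - 2 * m k)
          ≤ ∏ k ∈ Finset.Icc (i + 1) j, Real.exp (-(2 * m k)) := by
            refine Finset.prod_le_prod (fun k _ => by linarith [hm1 k]) (fun k _ => ?_)
            linarith [Real.add_one_le_exp (-(2 * m k))]
        _ = Real.exp (∑ k ∈ Finset.Icc (i + 1) j, -(2 * m k)) := (Real.exp_sum _ _).symm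
        _ = Real.exp (-(2 * ∑ k ∈ Finset.Icc (i + 1) j, m k)) := by
            rw [Finset.sum_neg_distrib, ← Finset.mul_sum]
    refine squeeze_zero_norm hbound ?_
    exact Real.tendsto_exp_atBot.comp ((tendsto_neg_atBot_iff).mpr (hT.const_mul_atTop two_pos))
end

section
/- If ∑_n min(p_n, q_n) = ∞ (mixing), then lim_{n→∞} P(Y_n = 1 | Y_1 = k) = 1/2 for k ∈ {-1, +1}. -/
open Filter Finset

/-- If `∑_n min(p_n, q_n) = ∞` (mixing), then `lim_{n→∞} P(Y_n = 1 | Y_1 = k) = 1/2`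
for `k ∈ {-1, +1}`. Here `x n = P(Y_n = 1 | Y_1 = k)` satisfies `x 1 = 1` if `k = 1`,
`x 1 = 0` if `k = -1`, and the Markov recursion with flip probability `p_{n+1}` at step `n`. -/
theorem mixing_implies_symmetrization
    (p : ℕ → ℝ) (hp : ∀ n, p n ∈ Set.Icc (0 : ℝ) 1)
    (hmix : ¬ Summable (fun n => min (p n) (1 - p n)))
    (k : ℝ) (hk : k = 1 ∨ k = -1)
    (x : ℕ → ℝ) (hx1 : x 1 = if k = 1 then 1 else 0)
    (hrec : ∀ n ≥ 1, x (n + 1) = p (n + 1) * (1 - x n) + (1 - p (n + 1)) * x n) :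
    Tendsto x atTop (nhds (1 / 2)) := by
  set m : ℕ → ℝ := fun n => min (p n) (1 - p n) with hm
  have hm0 : ∀ n, 0 ≤ m n := fun n => le_min (hp n).1 (by linarith [(hp n).2])
  have hm1 : ∀ n, m n ≤ 1 / 2 := by
    intro n
    rcases le_total (p n) (1 - p n) with h | h
    · simpa [hm, min_eq_left h] using by linarith
    · simpa [hm, min_eq_right h] using by linarith
  have habs : ∀ n, |1 - 2 * p n| = 1 - 2 * m n := by
    intro n
    rcases le_total (p n) (1 - p n) with h | h
    · have hmn : m n = p n := min_eq_left h
      rw [abs_of_nonneg (by linarith), hmn]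
    · have hmn : m n = 1 - p n := min_eq_right h
      rw [abs_of_nonpos (by linarith), hmn]; ring
  -- key inductive bound
  have key : ∀ n ≥ 1, |x n - 1 / 2| ≤ (1 / 2) * ∏ j ∈ Ico 2 (n + 1), (1 - 2 * m j) := by
    intro n hn
    induction n with
    | zero => omega
    | succ n ih =>
      rcases Nat.eq_or_lt_of_le hn with h1 | h1
      · simp only [← h1]
        rw [show (1 : ℕ) + 1 = 2 from rfl, Finset.Ico_self, Finset.prod_empty]
        rcases hk with hk | hk <;> simp [hx1, hk] <;> norm_num [abs_le]
      · have hn1 : n ≥ 1 := by omega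
        have hrw : x (n + 1) - 1 / 2 = (1 - 2 * p (n + 1)) * (x n - 1 / 2) := by
          rw [hrec n hn1]; ring
        have hprod : ∏ j ∈ Ico 2 (n + 1 + 1), (1 - 2 * m j)
            = (∏ j ∈ Ico 2 (n + 1), (1 - 2 * m j)) * (1 - 2 * m (n + 1)) := by
          rw [Finset.prod_Ico_succ_top (by omega)]
        rw [hrw, abs_mul, habs, hprod]
        have h2 : 0 ≤ 1 - 2 * m (n + 1) := by linarith [hm1 (n + 1)]
        calc (1 - 2 * m (n + 1)) * |x n - 1 / 2|
            ≤ (1 - 2 * m (n + 1)) * ((1 / 2) * ∏ j ∈ Ico 2 (n + 1), (1 - 2 * m j)) :=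
              mul_le_mul_of_nonneg_left (ih hn1) h2
          _ = 1 / 2 * ((∏ j ∈ Ico 2 (n + 1), (1 - 2 * m j)) * (1 - 2 * m (n + 1))) := by ring
  -- product bounded by exp of minus sum
  have prod_le : ∀ n, ∏ j ∈ Ico 2 (n + 1), (1 - 2 * m j)
      ≤ Real.exp (-(2 * ∑ j ∈ Ico 2 (n + 1), m j)) := by
    intro n
    have : ∀ j ∈ Ico 2 (n + 1), (1 - 2 * m j) ≤ Real.exp (-(2 * m j)) := by
      intro j _
      have := Real.add_one_le_exp (-(2 * m j))
      linarith
    calc ∏ j ∈ Ico 2 (n + 1), (1 - 2 * m j)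
        ≤ ∏ j ∈ Ico 2 (n + 1), Real.exp (-(2 * m j)) :=
          Finset.prod_le_prod (fun j _ => by linarith [hm1 j]) this
      _ = Real.exp (∑ j ∈ Ico 2 (n + 1), -(2 * m j)) := (Real.exp_sum _ _).symm
      _ = Real.exp (-(2 * ∑ j ∈ Ico 2 (n + 1), m j)) := by
          congr 1
          rw [Finset.mul_sum, ← Finset.sum_neg_distrib]
  -- divergence of sum
  have hsum : Tendsto (fun n => ∑ j ∈ range n, m j) atTop atTop :=
    (not_summable_iff_tendsto_nat_atTop_of_nonneg hm0).mp hmix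
  have hsum2 : Tendsto (fun n => ∑ j ∈ Ico 2 (n + 1), m j) atTop atTop := by
    have heq : ∀ n ≥ 1, ∑ j ∈ Ico 2 (n + 1), m j
        = (∑ j ∈ range (n + 1), m j) - ∑ j ∈ range 2, m j := by
      intro n hn
      rw [Finset.sum_Ico_eq_sub _ (by omega : 2 ≤ n + 1)]
    apply Tendsto.congr' (Filter.eventually_atTop.mpr ⟨1, fun n hn => (heq n hn).symm⟩)
    exact tendsto_atTop_add_const_right _ _ (hsum.comp (tendsto_add_atTop_nat 1))
  have hexp : Tendsto (fun n => (1 / 2 : ℝ) * Real.exp (-(2 * ∑ j ∈ Ico 2 (n + 1), m j)))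
      atTop (nhds 0) := by
    have : Tendsto (fun n => -(2 * ∑ j ∈ Ico 2 (n + 1), m j)) atTop atBot :=
      tendsto_neg_atTop_atBot.comp (hsum2.const_mul_atTop (by norm_num : (0:ℝ) < 2))
    simpa using (Real.tendsto_exp_atBot.comp this).const_mul (1 / 2 : ℝ)
  -- squeeze
  have habs0 : Tendsto (fun n => |x n - 1 / 2|) atTop (nhds 0) := by
    apply squeeze_zero' (Filter.Eventually.of_forall fun n => abs_nonneg _)
      (Filter.eventually_atTop.mpr ⟨1, fun n hn =>
        (key n hn).trans (by
          have := prod_le n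
          nlinarith [Real.exp_pos (-(2 * ∑ j ∈ Ico 2 (n + 1), m j))])⟩) hexp
  have : Tendsto (fun n => x n - 1 / 2) atTop (nhds 0) := by
    rwa [tendsto_zero_iff_abs_tendsto_zero]
  have := this.add_const (1 / 2 : ℝ)
  simpa using this
end

section
/- The martingale increments satisfy Var(M_{n+1} - M_n) = a_{n+1}² - (1 - a_n)² = 4 a_{n+1}² p_{n+1} q_{n+1}. -/
open MeasureTheory ProbabilityTheory Filter Finset

/-- The increments of the approximating martingale `M_n = Y_1 + ⋯ + Y_{n-1} + a_n Y_n`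
satisfy `Var(M_{n+1} - M_n) = a_{n+1}² - (1 - a_n)² = 4 a_{n+1}² p_{n+1} q_{n+1}`. -/
theorem martingale_increment_variance
    {Ω : Type*} {mΩ : MeasurableSpace Ω} (P : Measure Ω) [IsProbabilityMeasure P]
    (p : ℕ → ℝ) (hp : ∀ n, p n ∈ Set.Icc (0 : ℝ) 1) (hp1 : p 1 = 1 / 2)
    (X : ℕ → Ω → ℝ)
    (hXmeas : ∀ k, Measurable (X k))
    (hXindep : iIndepFun X P)
    (hXval : ∀ k ω, X k ω = 1 ∨ X k ω = -1)
    (hXmean : ∀ k, ∫ ω, X k ω ∂P = 1 - 2 * p k)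
    (Y : ℕ → Ω → ℝ)
    (hY : ∀ n ω, Y n ω = ∏ k ∈ Finset.Icc 1 n, X k ω)
    (a : ℕ → ℝ)
    (habs : ∀ n, Summable (fun i => |∏ k ∈ Finset.Icc (n + 1) (n + i), (1 - 2 * p k)|))
    (ha : ∀ n, HasSum (fun i => ∏ k ∈ Finset.Icc (n + 1) (n + i), (1 - 2 * p k)) (a n))
    (M : ℕ → Ω → ℝ)
    (hM : ∀ n ω, M n ω = (∑ k ∈ Finset.Ico 1 n, Y k ω) + a n * Y n ω)
    (n : ℕ) (hn : 1 ≤ n) :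
    variance (fun ω => M (n + 1) ω - M n ω) P = (a (n + 1)) ^ 2 - (1 - a n) ^ 2 ∧
    variance (fun ω => M (n + 1) ω - M n ω) P
      = 4 * (a (n + 1)) ^ 2 * p (n + 1) * (1 - p (n + 1)) := by
  -- recursion a n = 1 + (1 - 2 p (n+1)) a (n+1)
  have hrec : a n = 1 + (1 - 2 * p (n + 1)) * a (n + 1) := by
    have h1 : HasSum (fun i => (1 - 2 * p (n + 1)) *
        ∏ k ∈ Finset.Icc (n + 1 + 1) (n + 1 + i), (1 - 2 * p k))
        ((1 - 2 * p (n + 1)) * a (n + 1)) := (ha (n + 1)).mul_left _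
    have heq : (fun i => ∏ k ∈ Finset.Icc (n + 1) (n + (i + 1)), (1 - 2 * p k))
        = fun i => (1 - 2 * p (n + 1)) *
          ∏ k ∈ Finset.Icc (n + 1 + 1) (n + 1 + i), (1 - 2 * p k) := by
      funext i
      have hins : Finset.Icc (n + 1) (n + (i + 1))
          = insert (n + 1) (Finset.Icc (n + 1 + 1) (n + 1 + i)) := by
        ext x; simp only [Finset.mem_Icc, Finset.mem_insert]; omega
      rw [hins, Finset.prod_insert (by simp)]
    have h2 : HasSum (fun i => ∏ k ∈ Finset.Icc (n + 1) (n + (i + 1)), (1 - 2 * p k))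
        ((1 - 2 * p (n + 1)) * a (n + 1)) := by rw [heq]; exact h1
    have h3 := (hasSum_nat_add_iff (f := fun i => ∏ k ∈ Finset.Icc (n + 1) (n + i),
      (1 - 2 * p k)) 1).mp h2
    have h4 : (∑ i ∈ Finset.range 1,
        ∏ k ∈ Finset.Icc (n + 1) (n + i), (1 - 2 * p k)) = 1 := by
      simp
    rw [h4] at h3
    have := (ha n).unique h3
    linarith
  set c : ℝ := 1 - 2 * p (n + 1) with hc
  -- basic facts
  have habsX : ∀ k ω, |X k ω| = 1 := by
    intro k ω; rcases hXval k ω with h | h <;> rw [h] <;> norm_num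
  have habsY : ∀ m ω, |Y m ω| = 1 := by
    intro m ω
    rw [hY, Finset.abs_prod]
    exact Finset.prod_eq_one fun k _ => habsX k ω
  have hYsq : ∀ m ω, Y m ω ^ 2 = 1 := by
    intro m ω
    have := habsY m ω
    nlinarith [abs_nonneg (Y m ω), sq_abs (Y m ω)]
  have hXsq : ∀ ω, X (n + 1) ω ^ 2 = 1 := by
    intro ω; rcases hXval (n + 1) ω with h | h <;> rw [h] <;> norm_num
  have hYmeas : Measurable (Y n) := by
    have : Y n = fun ω => ∏ k ∈ Finset.Icc 1 n, X k ω := funext (hY n)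
    rw [this]
    exact Finset.measurable_prod _ fun k _ => hXmeas k
  -- increment formula
  have hD : ∀ ω, M (n + 1) ω - M n ω
      = (1 - a n) * Y n ω + a (n + 1) * (Y n ω * X (n + 1) ω) := by
    intro ω
    have hsum : ∑ k ∈ Finset.Ico 1 (n + 1), Y k ω
        = (∑ k ∈ Finset.Ico 1 n, Y k ω) + Y n ω :=
      Finset.sum_Ico_succ_top hn _
    have hYsucc : Y (n + 1) ω = Y n ω * X (n + 1) ω := by
      rw [hY, hY, Finset.prod_Icc_succ_top (by omega)]
    rw [hM, hM, hsum, hYsucc]; ring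
  -- independence
  have hindep : IndepFun (Y n) (X (n + 1)) P := by
    have : Y n = ∏ j ∈ Finset.Icc 1 n, X j := by
      funext ω; rw [hY]; simp [Finset.prod_apply]
    rw [this]
    exact hXindep.indepFun_finsetProd_of_notMem hXmeas (by simp)
  -- integrability
  have hint : ∀ (f : Ω → ℝ), Measurable f → (∀ ω, |f ω| ≤ 1) → Integrable f P := by
    intro f hf hb
    exact (memLp_top_of_bound hf.aestronglyMeasurable 1
      (ae_of_all _ fun ω => by simpa [Real.norm_eq_abs] using hb ω)).integrable le_top
  have hintY : Integrable (Y n) P := hint _ hYmeas fun ω => (habsY n ω).le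
  have hintX : Integrable (X (n + 1)) P := hint _ (hXmeas _) fun ω => (habsX _ ω).le
  have hintYX : Integrable (fun ω => Y n ω * X (n + 1) ω) P := by
    refine hint _ (hYmeas.mul (hXmeas _)) fun ω => ?_
    rw [abs_mul, habsY, habsX]; norm_num
  -- cross expectation
  have hcross : ∫ ω, Y n ω * X (n + 1) ω ∂P = (∫ ω, Y n ω ∂P) * c := by
    have := hindep.integral_fun_mul_eq_mul_integral hYmeas.aestronglyMeasurable (hXmeas _).aestronglyMeasurable
    rw [hXmean] at this
    exact this
  -- mean of increment is zero
  have hDfun : (fun ω => M (n + 1) ω - M n ω)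
      = fun ω => (1 - a n) * Y n ω + a (n + 1) * (Y n ω * X (n + 1) ω) := funext hD
  have hmean : ∫ ω, M (n + 1) ω - M n ω ∂P = 0 := by
    rw [hDfun, integral_add (hintY.const_mul _) (hintYX.const_mul _),
      integral_const_mul, integral_const_mul, hcross]
    linear_combination (-(∫ ω, Y n ω ∂P)) * hrec
  -- squared increment
  have hDsq : ((fun ω => M (n + 1) ω - M n ω) ^ 2)
      = fun ω => ((1 - a n) ^ 2 + a (n + 1) ^ 2)
        + (2 * (1 - a n) * a (n + 1)) * X (n + 1) ω := by
    funext ω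
    simp only [Pi.pow_apply]
    rw [hD ω]
    have h1 := hYsq n ω
    have h2 := hXsq ω
    linear_combination ((1 - a n) ^ 2 + 2 * (1 - a n) * a (n + 1) * X (n + 1) ω
      + a (n + 1) ^ 2 * X (n + 1) ω ^ 2) * h1 + a (n + 1) ^ 2 * h2
  -- Memℒp
  have hDmeas : Measurable (fun ω => M (n + 1) ω - M n ω) := by
    rw [hDfun]
    exact ((hYmeas.const_mul _).add ((hYmeas.mul (hXmeas _)).const_mul _))
  have hmem : MemLp (fun ω => M (n + 1) ω - M n ω) 2 P := by
    refine (memLp_top_of_bound hDmeas.aestronglyMeasurable (|1 - a n| + |a (n + 1)|)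
      (ae_of_all _ fun ω => ?_)).mono_exponent le_top
    rw [Real.norm_eq_abs, hD ω]
    calc |(1 - a n) * Y n ω + a (n + 1) * (Y n ω * X (n + 1) ω)|
        ≤ |(1 - a n) * Y n ω| + |a (n + 1) * (Y n ω * X (n + 1) ω)| := abs_add_le _ _
      _ = |1 - a n| + |a (n + 1)| := by
          rw [abs_mul, abs_mul, abs_mul, habsY, habsX]; ring
  have hvar : variance (fun ω => M (n + 1) ω - M n ω) P
      = a (n + 1) ^ 2 - (1 - a n) ^ 2 := by
    rw [variance_eq_sub hmem, hmean, hDsq,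
      integral_add (integrable_const _) (hintX.const_mul _),
      integral_const, integral_const_mul, hXmean]
    simp only [probReal_univ, ENNReal.toReal_one, one_smul]
    linear_combination (-2 * (1 - a n)) * hrec
  refine ⟨hvar, ?_⟩
  rw [hvar]
  linear_combination (1 - a n - (1 - 2 * p (n + 1)) * a (n + 1)) * hrec
end

section
/- Suppose q_n → 0, ∑_n q_n = ∞, and lim_{n→∞} q_{n+1}/q_n = 1. Then lim_{n→∞} a_n = 1/2, where a_n := ∑_{i=0}^∞ (-1)^i ∏_{j=1}^{i} (1 - 2 q_{n+j}). -/
open Filter Finset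

/-- Suppose `q_n → 0`, `∑ q_n = ∞`, and `q_{n+1}/q_n → 1`. Then `a_n → 1/2`, where
`a_n = ∑_{i=0}^∞ (-1)^i ∏_{j=1}^i (1 - 2 q_{n+j})`. -/
theorem heating_a_tendsto_half
    (q : ℕ → ℝ) (hq : ∀ n, q n ∈ Set.Icc (0 : ℝ) (1 / 2))
    (hq0 : Tendsto q atTop (nhds 0))
    (hqdiv : ¬ Summable q)
    (hratio : Tendsto (fun n => q (n + 1) / q n) atTop (nhds 1))
    (a : ℕ → ℝ)
    (ha : ∀ n, HasSum
      (fun i => (-1 : ℝ) ^ i * ∏ j ∈ Finset.Icc 1 i, (1 - 2 * q (n + j))) (a n)) :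
    Tendsto a atTop (nhds (1 / 2)) := by
  rw [Metric.tendsto_atTop]
  intro ε hε
  set δ : ℝ := min (ε / 4) (1 / 2) with hδdef
  have hδpos : 0 < δ := lt_min (by linarith) (by norm_num)
  have hδhalf : δ ≤ 1 / 2 := min_le_right _ _
  have hδε : δ ≤ ε / 4 := min_le_left _ _
  obtain ⟨N₁, hN₁⟩ := (Metric.tendsto_atTop.mp hq0) δ hδpos
  obtain ⟨N₂, hN₂⟩ := (Metric.tendsto_atTop.mp hratio) δ hδpos
  -- basic consequences
  have hqδ : ∀ m, N₁ ≤ m → q m ≤ δ := by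
    intro m hm
    have := hN₁ m hm
    rw [Real.dist_eq, sub_zero] at this
    exact (abs_lt.mp this).2.le
  have hrat : ∀ m, N₂ ≤ m → (1 - δ) * q m ≤ q (m + 1) ∧ q (m + 1) ≤ (1 + δ) * q m := by
    intro m hm
    have h := hN₂ m hm
    rw [Real.dist_eq] at h
    have hpos : 0 < q m := by
      rcases (hq m).1.lt_or_eq with h0 | h0
      · exact h0
      · exfalso
        rw [← h0, div_zero] at h
        rw [abs_sub_comm] at h
        simp only [sub_zero, abs_one] at h
        linarith
    have h1 : 1 - δ ≤ q (m + 1) / q m := by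
      have := (abs_lt.mp h).1; linarith
    have h2 : q (m + 1) / q m ≤ 1 + δ := by
      have := (abs_lt.mp h).2; linarith
    constructor
    · calc (1 - δ) * q m ≤ (q (m + 1) / q m) * q m :=
            mul_le_mul_of_nonneg_right h1 hpos.le
        _ = q (m + 1) := by field_simp
    · calc q (m + 1) = (q (m + 1) / q m) * q m := by field_simp
        _ ≤ (1 + δ) * q m := mul_le_mul_of_nonneg_right h2 hpos.le
  refine ⟨max N₁ N₂, fun n hn => ?_⟩
  have hn1 : N₁ ≤ n := le_trans (le_max_left _ _) hn
  have hn2 : N₂ ≤ n := le_trans (le_max_right _ _) hn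
  set w : ℕ → ℝ := fun i => ∏ j ∈ Finset.Icc 1 i, (1 - 2 * q (n + j)) with hwdef
  have hw0 : w 0 = 1 := by simp [hwdef]
  have hwsucc : ∀ i, w (i + 1) = w i * (1 - 2 * q (n + i + 1)) := by
    intro i
    simp only [hwdef]
    rw [Finset.prod_Icc_succ_top (by omega : 1 ≤ i + 1), add_assoc]
  have hwnn : ∀ i, 0 ≤ w i := by
    intro i
    apply Finset.prod_nonneg
    intro j _
    have := (hq (n + j)).2
    linarith
  have hwle1 : ∀ i, w i ≤ 1 := by
    intro i
    apply Finset.prod_le_one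
    · intro j _
      have := (hq (n + j)).2; linarith
    · intro j _
      have := (hq (n + j)).1; linarith
  have hwmono : ∀ i, w (i + 1) ≤ w i := by
    intro i
    rw [hwsucc i]
    have h1 := (hq (n + i + 1)).1
    nlinarith [hwnn i]
  -- the key per-term bound
  have hterm : ∀ k, |(w (2 * k) - w (2 * k + 1)) - (w (2 * k + 1) - w (2 * k + 2))|
      ≤ 3 * δ * (w (2 * k) - w (2 * k + 1)) := by
    intro k
    have e1 : w (2 * k + 1) = w (2 * k) * (1 - 2 * q (n + 2 * k + 1)) := hwsucc (2 * k)
    have e2 : w (2 * k + 2) = w (2 * k + 1) * (1 - 2 * q (n + 2 * k + 2)) := by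
      have := hwsucc (2 * k + 1)
      rw [show n + (2 * k + 1) + 1 = n + 2 * k + 2 by omega] at this
      exact this
    set W := w (2 * k) with hW
    set q₁ := q (n + 2 * k + 1) with hq₁
    set q₂ := q (n + 2 * k + 2) with hq₂
    have hWnn : 0 ≤ W := hwnn _
    have hq1nn : 0 ≤ q₁ := (hq _).1
    have hq1half : q₁ ≤ 1 / 2 := (hq _).2
    have hq2nn : 0 ≤ q₂ := (hq _).1
    have hq1δ : q₁ ≤ δ := hqδ _ (by omega)
    have hr := hrat (n + 2 * k + 1) (by omega)
    rw [show n + 2 * k + 1 + 1 = n + 2 * k + 2 by omega] at hr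
    obtain ⟨hr1, hr2⟩ := hr
    rw [e2, e1]
    rw [abs_le]
    constructor
    · -- lower bound: -(w2k q1 ...) 
      nlinarith [mul_nonneg hWnn hq1nn, mul_nonneg (mul_nonneg hWnn hq1nn) hq1nn,
        mul_le_mul_of_nonneg_left hr2 hWnn, mul_nonneg (mul_nonneg hWnn hq2nn) hq1nn]
    · nlinarith [mul_nonneg hWnn hq1nn, mul_le_mul_of_nonneg_left hr1 hWnn,
        mul_nonneg (mul_nonneg hWnn hq1nn) hq1nn,
        mul_nonneg (mul_nonneg hWnn hq1nn) (sub_nonneg.mpr hδhalf)]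
  have htermnn : ∀ k, 0 ≤ w (2 * k) - w (2 * k + 1) := fun k => sub_nonneg.mpr (hwmono _)
  -- partial sums
  set S : ℕ → ℝ := fun K => ∑ i ∈ Finset.range K, (-1 : ℝ) ^ i * w i with hSdef
  have hStend : Tendsto S atTop (nhds (a n)) := (ha n).tendsto_sum_nat
  set A : ℕ → ℝ := fun K => ∑ k ∈ Finset.range K, (w (2 * k) - w (2 * k + 1)) with hAdef
  set B : ℕ → ℝ := fun K => ∑ k ∈ Finset.range K, (w (2 * k + 1) - w (2 * k + 2)) with hBdef
  have hstep : ∀ m, S (m + 2) = S m + (-1 : ℝ) ^ m * w m + (-1 : ℝ) ^ (m + 1) * w (m + 1) := by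
    intro m
    simp only [hSdef]
    rw [Finset.sum_range_succ, Finset.sum_range_succ]
  have hpe : ∀ K : ℕ, ((-1 : ℝ)) ^ (2 * K) = 1 := by
    intro K; rw [pow_mul]; norm_num
  have hAS : ∀ K, A K = S (2 * K) := by
    intro K
    induction K with
    | zero => simp [hAdef, hSdef]
    | succ K ih =>
      have e1 : A (K + 1) = A K + (w (2 * K) - w (2 * K + 1)) := by
        simp only [hAdef, Finset.sum_range_succ]
      have e2 : S (2 * (K + 1)) = S (2 * K) + (-1 : ℝ) ^ (2 * K) * w (2 * K)
          + (-1 : ℝ) ^ (2 * K + 1) * w (2 * K + 1) := by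
        rw [show 2 * (K + 1) = 2 * K + 2 by omega]
        exact hstep (2 * K)
      rw [e1, e2, ih, hpe K, pow_succ, hpe K]
      ring
  have hBS : ∀ K, B K = 1 - S (2 * K + 1) := by
    intro K
    induction K with
    | zero => simp [hBdef, hSdef, hw0]
    | succ K ih =>
      have e1 : B (K + 1) = B K + (w (2 * K + 1) - w (2 * K + 2)) := by
        simp only [hBdef, Finset.sum_range_succ]
      have e2 : S (2 * (K + 1) + 1) = S (2 * K + 1) + (-1 : ℝ) ^ (2 * K + 1) * w (2 * K + 1)
          + (-1 : ℝ) ^ (2 * K + 2) * w (2 * K + 2) := by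
        rw [show 2 * (K + 1) + 1 = (2 * K + 1) + 2 by omega]
        have := hstep (2 * K + 1)
        rw [show 2 * K + 1 + 1 = 2 * K + 2 by omega] at this
        exact this
      have hp1 : ((-1 : ℝ)) ^ (2 * K + 1) = -1 := by rw [pow_succ, hpe K]; ring
      have hp2 : ((-1 : ℝ)) ^ (2 * K + 2) = 1 := by
        rw [show 2 * K + 2 = 2 * (K + 1) by omega]; exact hpe (K + 1)
      rw [e1, e2, ih, hp1, hp2]
      ring
  have h2K : Tendsto (fun K : ℕ => 2 * K) atTop atTop :=
    tendsto_atTop_atTop.mpr (fun b => ⟨b, fun a ha => by omega⟩)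
  have h2K1 : Tendsto (fun K : ℕ => 2 * K + 1) atTop atTop :=
    tendsto_atTop_atTop.mpr (fun b => ⟨b, fun a ha => by omega⟩)
  have hAtend : Tendsto A atTop (nhds (a n)) :=
    Filter.Tendsto.congr (fun K => (hAS K).symm) (hStend.comp h2K)
  have hBtend : Tendsto B atTop (nhds (1 - a n)) :=
    Filter.Tendsto.congr (fun K => (hBS K).symm)
      (tendsto_const_nhds.sub (hStend.comp h2K1))
  -- A K ≤ 1
  have hAle1 : ∀ K, A K ≤ 1 := by
    intro K
    have h1 : A K ≤ ∑ k ∈ Finset.range K, (w (2 * k) - w (2 * (k + 1))) := by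
      apply Finset.sum_le_sum
      intro k _
      have : w (2 * (k + 1)) ≤ w (2 * k + 1) := by
        rw [show 2 * (k + 1) = (2 * k + 1) + 1 by omega]
        exact hwmono _
      linarith
    have h2 : ∑ k ∈ Finset.range K, (w (2 * k) - w (2 * (k + 1))) = w 0 - w (2 * K) :=
      Finset.sum_range_sub' (fun k => w (2 * k)) K
    rw [h2, hw0] at h1
    have := hwnn (2 * K)
    linarith
  have hAnn : ∀ K, 0 ≤ A K := fun K => Finset.sum_nonneg fun k _ => htermnn k
  -- |A K - B K| ≤ 3δ
  have hABbound : ∀ K, |A K - B K| ≤ 3 * δ := by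
    intro K
    have hdiff : A K - B K
        = ∑ k ∈ Finset.range K, ((w (2 * k) - w (2 * k + 1)) - (w (2 * k + 1) - w (2 * k + 2))) := by
      simp [hAdef, hBdef, Finset.sum_sub_distrib]
    rw [hdiff]
    calc |∑ k ∈ Finset.range K, ((w (2 * k) - w (2 * k + 1)) - (w (2 * k + 1) - w (2 * k + 2)))|
        ≤ ∑ k ∈ Finset.range K, |(w (2 * k) - w (2 * k + 1)) - (w (2 * k + 1) - w (2 * k + 2))| :=
          Finset.abs_sum_le_sum_abs _ _
      _ ≤ ∑ k ∈ Finset.range K, 3 * δ * (w (2 * k) - w (2 * k + 1)) :=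
          Finset.sum_le_sum (fun k _ => hterm k)
      _ = 3 * δ * A K := by rw [hAdef, ← Finset.mul_sum]
      _ ≤ 3 * δ * 1 := by
          apply mul_le_mul_of_nonneg_left (hAle1 K)
          positivity
      _ = 3 * δ := by ring
  -- take limits
  have hlim : Tendsto (fun K => |A K - B K|) atTop (nhds |a n - (1 - a n)|) :=
    (hAtend.sub hBtend).abs
  have hfinal : |a n - (1 - a n)| ≤ 3 * δ :=
    le_of_tendsto hlim (Filter.Eventually.of_forall hABbound)
  rw [Real.dist_eq]
  have : |a n - 1 / 2| ≤ 3 * δ / 2 := by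
    rw [abs_le] at hfinal ⊢
    constructor <;> [linarith [hfinal.1]; linarith [hfinal.2]]
  calc |a n - 1 / 2| ≤ 3 * δ / 2 := this
    _ ≤ 3 * (ε / 4) / 2 := by linarith
    _ < ε := by linarith
end

section
/- If p_n ≤ 1/2 for all n, then Var(S_N / N) = 1/N + (2/N²) ∑_{1 ≤ i < j ≤ N} e_{i,j}, and this quantity is nonincreasing in each p_k (k ≥ 2). -/
open MeasureTheory ProbabilityTheory Filter Finset

/-- If `p_n ≤ 1/2` for all `n` (and `p_1 = 1/2`), then
`Var(S_N/N) = 1/N + (2/N²) ∑_{1 ≤ i < j ≤ N} e_{i,j}`, and this quantity is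
nonincreasing in each `p_k`: if `p'_k ≥ p_k` for all `k` with `p'_k ≤ 1/2`, then the
corresponding value of the formula is smaller or equal. -/
theorem variance_formula_and_monotone
    {Ω : Type*} [MeasurableSpace Ω] (P : Measure Ω) [IsProbabilityMeasure P]
    (p : ℕ → ℝ) (hp : ∀ n, 0 ≤ p n ∧ p n ≤ 1 / 2) (hp1 : p 1 = 1 / 2)
    (X : ℕ → Ω → ℝ)
    (hXmeas : ∀ k, Measurable (X k))
    (hXindep : iIndepFun X P)
    (hXval : ∀ k ω, X k ω = 1 ∨ X k ω = -1)
    (hXmean : ∀ k, ∫ ω, X k ω ∂P = 1 - 2 * p k)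
    (Y : ℕ → Ω → ℝ)
    (hY : ∀ n ω, Y n ω = ∏ k ∈ Finset.Icc 1 n, X k ω)
    (N : ℕ) (hN : 1 ≤ N) :
    variance (fun ω => (∑ k ∈ Finset.Icc 1 N, Y k ω) / N) P
      = 1 / N + 2 / (N : ℝ) ^ 2 *
          ∑ i ∈ Finset.Icc 1 N, ∑ j ∈ Finset.Ioc i N,
            ∏ k ∈ Finset.Icc (i + 1) j, (1 - 2 * p k) ∧
    (∀ p' : ℕ → ℝ, (∀ k, p k ≤ p' k) → (∀ k, p' k ≤ 1 / 2) →
      1 / N + 2 / (N : ℝ) ^ 2 *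
          ∑ i ∈ Finset.Icc 1 N, ∑ j ∈ Finset.Ioc i N,
            ∏ k ∈ Finset.Icc (i + 1) j, (1 - 2 * p' k)
        ≤ 1 / N + 2 / (N : ℝ) ^ 2 *
          ∑ i ∈ Finset.Icc 1 N, ∑ j ∈ Finset.Ioc i N,
            ∏ k ∈ Finset.Icc (i + 1) j, (1 - 2 * p k)) := by
  have hNpos : (0 : ℝ) < N := by exact_mod_cast hN
  have hNne : (N : ℝ) ≠ 0 := ne_of_gt hNpos
  -- basic facts about X
  have hXabs : ∀ k ω, |X k ω| = 1 := by
    intro k ω; rcases hXval k ω with h | h <;> simp [h]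
  have hXsq : ∀ k ω, X k ω * X k ω = 1 := by
    intro k ω; rcases hXval k ω with h | h <;> simp [h]
  -- products of the X's
  have hPmeas : ∀ s : Finset ℕ, Measurable (fun ω => ∏ k ∈ s, X k ω) :=
    fun s => Finset.measurable_prod s (fun i _ => hXmeas i)
  have hPabs : ∀ (s : Finset ℕ) ω, |∏ k ∈ s, X k ω| = 1 := by
    intro s ω
    rw [Finset.abs_prod]
    exact Finset.prod_eq_one (fun k _ => hXabs k ω)
  have hPint : ∀ s : Finset ℕ, Integrable (fun ω => ∏ k ∈ s, X k ω) P := by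
    intro s
    refine Integrable.mono' (integrable_const 1) (hPmeas s).aestronglyMeasurable ?_
    exact Filter.Eventually.of_forall fun ω => by
      rw [Real.norm_eq_abs, hPabs s ω]
  -- expectation of a product
  have hEprod : ∀ s : Finset ℕ, ∫ ω, ∏ k ∈ s, X k ω ∂P = ∏ k ∈ s, (1 - 2 * p k) := by
    intro s
    induction s using Finset.induction_on with
    | empty => simp
    | @insert a s ha ih =>
      have hindep : IndepFun (X a) (fun ω => ∏ j ∈ s, X j ω) P := by
        have := (hXindep.indepFun_finset_prod_of_notMem hXmeas ha).symm
        have heq : (∏ j ∈ s, X j) = fun ω => ∏ j ∈ s, X j ω := by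
          funext ω; simp
        rwa [heq] at this
      have hmul := hindep.integral_mul_eq_mul_integral (hPint {a} |>.congr ?_).aestronglyMeasurable
        (hPint s).aestronglyMeasurable
      · have : (fun ω => ∏ k ∈ insert a s, X k ω)
            = (fun ω => X a ω * ∏ k ∈ s, X k ω) := by
          funext ω; rw [Finset.prod_insert ha]
        rw [this]
        have : (fun ω => X a ω * ∏ k ∈ s, X k ω)
            = (X a) * (fun ω => ∏ j ∈ s, X j ω) := rfl
        rw [this, hmul, Finset.prod_insert ha, ← ih, hXmean a]
      · exact Filter.Eventually.of_forall fun ω => by simp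
  -- integrability and expectations of the Y's
  have hYabs : ∀ n ω, |Y n ω| = 1 := by
    intro n ω; rw [hY]; exact hPabs _ ω
  have hYmeas : ∀ n, Measurable (Y n) := by
    intro n
    have : Y n = fun ω => ∏ k ∈ Finset.Icc 1 n, X k ω := funext (hY n)
    rw [this]; exact hPmeas _
  have hYint : ∀ n, Integrable (Y n) P := by
    intro n
    refine Integrable.mono' (integrable_const 1) (hYmeas n).aestronglyMeasurable ?_
    exact Filter.Eventually.of_forall fun ω => by rw [Real.norm_eq_abs, hYabs n ω]
  have hEY : ∀ n, 1 ≤ n → ∫ ω, Y n ω ∂P = 0 := by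
    intro n hn
    have : ∫ ω, Y n ω ∂P = ∫ ω, ∏ k ∈ Finset.Icc 1 n, X k ω ∂P :=
      integral_congr_ae (Filter.Eventually.of_forall fun ω => hY n ω)
    rw [this, hEprod]
    refine Finset.prod_eq_zero (Finset.mem_Icc.2 ⟨le_refl 1, hn⟩) ?_
    rw [hp1]; ring
  -- product of two Y's
  have hYmul : ∀ i j, i ≤ j → ∀ ω, Y i ω * Y j ω = ∏ k ∈ Finset.Ioc i j, X k ω := by
    intro i j hij ω
    have h1 : Finset.Icc 1 i = Finset.Ioc 0 i := by rw [← Finset.Icc_add_one_left_eq_Ioc]; rfl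
    have h2 : Finset.Icc 1 j = Finset.Ioc 0 j := by rw [← Finset.Icc_add_one_left_eq_Ioc]; rfl
    rw [hY, hY, h1, h2, ← Finset.prod_Ioc_consecutive (fun k => X k ω) (Nat.zero_le i) hij,
      ← mul_assoc, ← Finset.prod_mul_distrib]
    rw [Finset.prod_congr rfl (fun k _ => hXsq k ω), Finset.prod_const_one, one_mul]
  have hYYint : ∀ i j, Integrable (fun ω => Y i ω * Y j ω) P := by
    intro i j
    refine Integrable.mono' (integrable_const 1)
      (((hYmeas i).mul (hYmeas j)).aestronglyMeasurable) ?_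
    exact Filter.Eventually.of_forall fun ω => by
      rw [Real.norm_eq_abs, abs_mul, hYabs, hYabs, one_mul]
  have hEYY : ∀ i j, i ≤ j →
      ∫ ω, Y i ω * Y j ω ∂P = ∏ k ∈ Finset.Ioc i j, (1 - 2 * p k) := by
    intro i j hij
    rw [integral_congr_ae (Filter.Eventually.of_forall fun ω => hYmul i j hij ω), hEprod]
  -- the function whose variance we compute
  set f : Ω → ℝ := fun ω => (∑ k ∈ Finset.Icc 1 N, Y k ω) / N with hf
  have hfmeas : Measurable f := (Finset.measurable_sum _ fun k _ => hYmeas k).div_const _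
  have hfbd : ∀ ω, ‖f ω‖ ≤ 1 := by
    intro ω
    rw [Real.norm_eq_abs, hf, abs_div, abs_of_pos hNpos, div_le_one hNpos]
    calc |∑ k ∈ Finset.Icc 1 N, Y k ω| ≤ ∑ k ∈ Finset.Icc 1 N, |Y k ω| :=
          Finset.abs_sum_le_sum_abs _ _
      _ = ∑ k ∈ Finset.Icc 1 N, (1 : ℝ) := Finset.sum_congr rfl fun k _ => hYabs k ω
      _ = N := by simp
  have hfmem : MemLp f 2 P :=
    MemLp.of_bound hfmeas.aestronglyMeasurable 1 (Filter.Eventually.of_forall hfbd)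
  -- mean of f is zero
  have hEf : ∫ ω, f ω ∂P = 0 := by
    simp only [hf, integral_div]
    rw [integral_finset_sum _ (fun k _ => hYint k)]
    rw [Finset.sum_congr rfl (fun k hk => hEY k (Finset.mem_Icc.1 hk).1)]
    simp
  -- second moment of f
  have hEf2 : ∫ ω, f ω ^ 2 ∂P
      = (∑ i ∈ Finset.Icc 1 N, ∑ j ∈ Finset.Icc 1 N, ∫ ω, Y i ω * Y j ω ∂P) / N ^ 2 := by
    have hptw : ∀ ω, f ω ^ 2
        = (∑ i ∈ Finset.Icc 1 N, ∑ j ∈ Finset.Icc 1 N, Y i ω * Y j ω) / N ^ 2 := by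
      intro ω
      rw [hf, div_pow, sq]
      rw [Finset.sum_mul_sum]
    rw [integral_congr_ae (Filter.Eventually.of_forall hptw), integral_div,
      integral_finset_sum _ (fun i _ => integrable_finset_sum _ (fun j _ => hYYint i j))]
    congr 1
    exact Finset.sum_congr rfl fun i _ =>
      integral_finset_sum _ (fun j _ => hYYint i j)
  -- abbreviation for the correlation terms
  set e : ℕ → ℕ → ℝ := fun i j => ∏ k ∈ Finset.Ioc i j, (1 - 2 * p k) with he
  set T : ℝ := ∑ i ∈ Finset.Icc 1 N, ∑ j ∈ Finset.Ioc i N, e i j with hT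
  -- the double sum
  have hdouble : (∑ i ∈ Finset.Icc 1 N, ∑ j ∈ Finset.Icc 1 N, ∫ ω, Y i ω * Y j ω ∂P)
      = N + 2 * T := by
    have hsplit : ∀ i ∈ Finset.Icc 1 N,
        ∑ j ∈ Finset.Icc 1 N, ∫ ω, Y i ω * Y j ω ∂P
          = (∑ j ∈ Finset.Icc 1 i, e j i) + ∑ j ∈ Finset.Ioc i N, e i j := by
      intro i hi
      obtain ⟨hi1, hiN⟩ := Finset.mem_Icc.1 hi
      have h1 : Finset.Icc 1 N = Finset.Ioc 0 N := by rw [← Finset.Icc_add_one_left_eq_Ioc]; rfl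
      have h2 : Finset.Icc 1 i = Finset.Ioc 0 i := by rw [← Finset.Icc_add_one_left_eq_Ioc]; rfl
      rw [h1, h2, ← Finset.sum_Ioc_consecutive
        (fun j => ∫ ω, Y i ω * Y j ω ∂P) (Nat.zero_le i) hiN]
      congr 1
      · refine Finset.sum_congr rfl fun j hj => ?_
        have hji : j ≤ i := (Finset.mem_Ioc.1 hj).2
        rw [show (fun ω => Y i ω * Y j ω) = (fun ω => Y j ω * Y i ω) from
          funext fun ω => mul_comm _ _]
        exact hEYY j i hji
      · exact Finset.sum_congr rfl fun j hj => hEYY i j (le_of_lt (Finset.mem_Ioc.1 hj).1)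
    rw [Finset.sum_congr rfl hsplit, Finset.sum_add_distrib, ← hT]
    have hpart1 : (∑ i ∈ Finset.Icc 1 N, ∑ j ∈ Finset.Icc 1 i, e j i) = N + T := by
      have hIco : ∀ a b : ℕ, Finset.Icc a b = Finset.Ico a (b + 1) := by
        intro a b; rw [Finset.Ico_add_one_right_eq_Icc]
      calc (∑ i ∈ Finset.Icc 1 N, ∑ j ∈ Finset.Icc 1 i, e j i)
          = ∑ i ∈ Finset.Ico 1 (N + 1), ∑ j ∈ Finset.Ico 1 (i + 1), e j i := by
            rw [← hIco]
            exact Finset.sum_congr rfl fun i _ => by rw [← hIco]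
        _ = ∑ j ∈ Finset.Ico 1 (N + 1), ∑ i ∈ Finset.Ico j (N + 1), e j i := by
            rw [Finset.sum_Ico_Ico_comm]
        _ = ∑ j ∈ Finset.Icc 1 N, ∑ i ∈ Finset.Icc j N, e j i := by
            rw [← hIco]
            exact Finset.sum_congr rfl fun j _ => by rw [← hIco]
        _ = ∑ j ∈ Finset.Icc 1 N, (1 + ∑ i ∈ Finset.Ioc j N, e j i) := by
            refine Finset.sum_congr rfl fun j hj => ?_
            obtain ⟨hj1, hjN⟩ := Finset.mem_Icc.1 hj
            rw [Finset.Icc_eq_cons_Ioc hjN, Finset.sum_cons]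
            congr 1
            simp [he]
        _ = N + T := by
            rw [Finset.sum_add_distrib, Finset.sum_const, Nat.card_Icc]
            simp [hT]
    rw [hpart1]
    ring
  -- the variance formula
  have hvar : variance f P = 1 / N + 2 / (N : ℝ) ^ 2 * T := by
    rw [variance_eq_sub hfmem]
    have h1 : P[f ^ 2] = ∫ ω, f ω ^ 2 ∂P := rfl
    have h2 : P[f] = ∫ ω, f ω ∂P := rfl
    rw [h1, h2, hEf, hEf2, hdouble]
    field_simp
    ring
  have hTeq : T = ∑ i ∈ Finset.Icc 1 N, ∑ j ∈ Finset.Ioc i N,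
      ∏ k ∈ Finset.Icc (i + 1) j, (1 - 2 * p k) := by
    refine Finset.sum_congr rfl fun i _ => Finset.sum_congr rfl fun j _ => ?_
    rw [he]
    simp [Finset.Icc_add_one_left_eq_Ioc]
  constructor
  · rw [hvar, hTeq]
  · intro p' hle hle2
    have : (∑ i ∈ Finset.Icc 1 N, ∑ j ∈ Finset.Ioc i N,
          ∏ k ∈ Finset.Icc (i + 1) j, (1 - 2 * p' k))
        ≤ ∑ i ∈ Finset.Icc 1 N, ∑ j ∈ Finset.Ioc i N,
          ∏ k ∈ Finset.Icc (i + 1) j, (1 - 2 * p k) := by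
      refine Finset.sum_le_sum fun i _ => Finset.sum_le_sum fun j _ => ?_
      refine Finset.prod_le_prod (fun k _ => ?_) (fun k _ => ?_)
      · linarith [hle2 k]
      · linarith [hle k]
    have h2N : (0 : ℝ) ≤ 2 / (N : ℝ) ^ 2 := by positivity
    nlinarith [mul_le_mul_of_nonneg_left this h2N]
end

section
/- Suppose ∑_n min(p_n, q_n) = ∞ (mixing) and the walk satisfies the spreading property: for all n, K, lim_{m→∞} P(|S_m| ≤ K | F_n) = 0 a.s. Then P(S_n = 0 infinitely often | Y_1) = 1, i.e. the coin-turning walk is recurrent. -/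
open MeasureTheory ProbabilityTheory Filter Finset

noncomputable def sg (x : ℝ) : ℝ := if 0 < x then 1 else if x < 0 then -1 else 0

lemma sg_of_pos {x : ℝ} (h : 0 < x) : sg x = 1 := by simp [sg, h]
lemma sg_of_neg {x : ℝ} (h : x < 0) : sg x = -1 := by simp [sg, h, asymm h]
lemma sg_abs_le (x : ℝ) : |sg x| ≤ 1 := by
  unfold sg; split_ifs <;> simp
lemma sg_neg (x : ℝ) : sg (-x) = - sg x := by
  rcases lt_trichotomy x 0 with h | h | h
  · rw [sg_of_neg h, sg_of_pos (by linarith)]; norm_num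
  · simp [h, sg]
  · rw [sg_of_pos h, sg_of_neg (by linarith)]
lemma sg_measurable : Measurable sg := by
  unfold sg
  exact Measurable.ite (measurableSet_lt measurable_const measurable_id)
    measurable_const <| Measurable.ite (measurableSet_lt measurable_id measurable_const)
    measurable_const measurable_const
lemma sg_shift {a w c : ℝ} (ha : |a| ≤ c) (hw : c < |w|) : sg (a + w) = sg w := by
  rcases abs_le.mp ha with ⟨h1, h2⟩
  rcases le_or_gt w 0 with h | h
  · have hw' : w < -c := by rcases abs_cases w with ⟨he, _⟩ | ⟨he, _⟩ <;> nlinarith [hw]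
    rw [sg_of_neg (by linarith), sg_of_neg (by linarith)]
  · have hw' : c < w := by rwa [abs_of_pos h] at hw
    rw [sg_of_pos (by linarith), sg_of_pos (by linarith)]

lemma indep_mono' {Ω : Type*} {mΩ : MeasurableSpace Ω} {μ : Measure Ω}
    {m₁ m₂ m₁' m₂' : MeasurableSpace Ω} (h : Indep m₁ m₂ μ) (h1 : m₁' ≤ m₁) (h2 : m₂' ≤ m₂) :
    Indep m₁' m₂' μ := by
  rw [Indep_iff] at h ⊢
  exact fun s t hs ht => h s t (h1 _ hs) (h2 _ ht)

lemma indepFun_of_indep_comap {Ω β γ : Type*} {mΩ : MeasurableSpace Ω}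
    {mβ : MeasurableSpace β} {mγ : MeasurableSpace γ} {μ : Measure Ω} {f : Ω → β} {g : Ω → γ}
    (h : Indep (MeasurableSpace.comap f mβ) (MeasurableSpace.comap g mγ) μ) : IndepFun f g μ := by
  rw [indepFun_iff_measure_inter_preimage_eq_mul]
  rw [Indep_iff] at h
  exact fun s t hs ht => h _ _ ⟨s, hs, rfl⟩ ⟨t, ht, rfl⟩

lemma integrable_of_bound {Ω : Type*} {mΩ : MeasurableSpace Ω} {μ : Measure Ω}
    [IsFiniteMeasure μ] {f : Ω → ℝ} (hm : AEStronglyMeasurable f μ) (C : ℝ)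
    (h : ∀ ω, |f ω| ≤ C) : Integrable f μ :=
  Integrable.mono' (integrable_const C) hm (ae_of_all _ (by simpa [Real.norm_eq_abs] using h))
/-- Suppose `∑_n min(p_n, q_n) = ∞` (mixing) and the coin-turning walk satisfies the
spreading property: for all `n, K`, `lim_{m→∞} P(|S_m| ≤ K | F_n) = 0` a.s., where
`F_n = σ(Y_1, …, Y_n)` is the natural filtration of `Y`. Then
`P(S_n = 0 infinitely often) = 1`, i.e. the coin-turning walk is recurrent. -/
theorem walk_recurrent_of_mixing_and_spreading
    {Ω : Type*} {mΩ : MeasurableSpace Ω} (P : Measure Ω) [IsProbabilityMeasure P]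
    (p : ℕ → ℝ) (hp : ∀ n, p n ∈ Set.Icc (0 : ℝ) 1) (hp1 : p 1 = 1 / 2)
    (hmix : ¬ Summable (fun n => min (p n) (1 - p n)))
    (X : ℕ → Ω → ℝ)
    (hXmeas : ∀ k, Measurable (X k))
    (hXindep : iIndepFun X P)
    (hXval : ∀ k ω, X k ω = 1 ∨ X k ω = -1)
    (hXmean : ∀ k, ∫ ω, X k ω ∂P = 1 - 2 * p k)
    (Y : ℕ → Ω → ℝ)
    (hY : ∀ n ω, Y n ω = ∏ k ∈ Finset.Icc 1 n, X k ω)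
    (hYmeas : ∀ n, StronglyMeasurable (Y n))
    (S : ℕ → Ω → ℝ)
    (hS : ∀ n ω, S n ω = ∑ k ∈ Finset.Icc 1 n, Y k ω)
    (hspread : ∀ n K : ℕ, ∀ᵐ ω ∂P,
      Tendsto
        (fun m =>
          (P[Set.indicator {ω' | |S m ω'| ≤ (K : ℝ)} (fun _ => (1 : ℝ))
            | (MeasureTheory.Filtration.natural Y hYmeas) n]) ω)
        atTop (nhds 0)) :
    P {ω | ∃ᶠ n in atTop, S n ω = 0} = 1 := by
  classical
  set F : Filtration ℕ mΩ := MeasureTheory.Filtration.natural Y hYmeas with hF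
  -- basic pointwise facts
  have hXabs : ∀ k ω, |X k ω| = 1 := by
    intro k ω; rcases hXval k ω with h | h <;> simp [h]
  have hYabs : ∀ n ω, |Y n ω| = 1 := by
    intro n ω; rw [hY, Finset.abs_prod]
    rw [Finset.prod_congr rfl fun k _ => hXabs k ω, Finset.prod_const_one]
  have hYunit : ∀ n ω, Y n ω = 1 ∨ Y n ω = -1 := by
    intro n ω
    rcases abs_eq (zero_le_one (α := ℝ)) |>.mp (hYabs n ω) with h | h
    · exact Or.inl h
    · exact Or.inr h
  have hSabs : ∀ r ω, |S r ω| ≤ (r : ℝ) := by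
    intro r ω
    rw [hS]
    calc |∑ k ∈ Finset.Icc 1 r, Y k ω| ≤ ∑ k ∈ Finset.Icc 1 r, |Y k ω| :=
          Finset.abs_sum_le_sum_abs _ _
      _ = ∑ k ∈ Finset.Icc 1 r, (1 : ℝ) := Finset.sum_congr rfl fun k _ => hYabs k ω
      _ = (r : ℝ) := by simp [Nat.card_Icc]
  have hSstep : ∀ m ω, S (m + 1) ω = S m ω + Y (m + 1) ω := by
    intro m ω
    rw [hS, hS, Finset.sum_Icc_succ_top (Nat.succ_le_succ (Nat.zero_le m))]
  have hSint : ∀ m ω, ∃ z : ℤ, S m ω = (z : ℝ) := by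
    intro m ω
    induction m with
    | zero => exact ⟨0, by simp [hS]⟩
    | succ m ih =>
      obtain ⟨z, hz⟩ := ih
      rcases hYunit (m + 1) ω with h | h
      · exact ⟨z + 1, by rw [hSstep, hz, h]; push_cast; ring⟩
      · exact ⟨z - 1, by rw [hSstep, hz, h]; push_cast; ring⟩
  have hSmeas : ∀ m, Measurable (S m) := by
    intro m
    have : S m = fun ω => ∑ k ∈ Finset.Icc 1 m, Y k ω := funext fun ω => hS m ω
    rw [this]
    exact Finset.measurable_sum _ fun k _ => (hYmeas k).measurable
  -- σ-algebra infrastructure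
  set mS : Set ℕ → MeasurableSpace Ω :=
    fun I => ⨆ i ∈ I, MeasurableSpace.comap (X i) inferInstance with hmS
  have hmS_le : ∀ I, mS I ≤ mΩ := fun I => iSup₂_le fun i _ => (hXmeas i).comap_le
  have hXmS : ∀ I i, i ∈ I → Measurable[mS I] (X i) := by
    intro I i hi
    exact measurable_iff_comap_le.mpr
      (le_iSup₂ (f := fun i (_ : i ∈ I) => MeasurableSpace.comap (X i) inferInstance) i hi)
  have hIndepS : ∀ I J : Set ℕ, Disjoint I J → Indep (mS I) (mS J) P :=
    fun I J h => indep_iSup_of_disjoint (fun i => (hXmeas i).comap_le) hXindep.iIndep h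
  have hYmS : ∀ (I : Set ℕ) (j : ℕ), Set.Iic j ⊆ I → Measurable[mS I] (Y j) := by
    intro I j hj
    have : Y j = fun ω => ∏ k ∈ Finset.Icc 1 j, X k ω := funext fun ω => hY j ω
    rw [this]
    exact Finset.measurable_prod _ fun k hk =>
      hXmS I k (hj (by simp at hk ⊢; omega))
  have hFleS : ∀ n, F n ≤ mS (Set.Iic n) := by
    intro n
    rw [hF]
    show (⨆ j, ⨆ _ : j ≤ n, MeasurableSpace.comap (Y j) inferInstance) ≤ mS (Set.Iic n)
    refine iSup₂_le fun j hj => ?_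
    exact measurable_iff_comap_le.mp (hYmS _ j (fun k hk => le_trans hk hj))
  have hYFn : ∀ n, Measurable[F n] (Y n) := by
    intro n
    rw [hF]
    exact measurable_iff_comap_le.mpr
      (le_iSup₂ (f := fun j (_ : j ≤ n) => MeasurableSpace.comap (Y j) inferInstance) n le_rfl)
  have hSFn : ∀ n, Measurable[F n] (S n) := by
    intro n
    have : S n = fun ω => ∑ k ∈ Finset.Icc 1 n, Y k ω := funext fun ω => hS n ω
    rw [this]
    refine Finset.measurable_sum _ fun k hk => ?_
    rw [hF]
    exact measurable_iff_comap_le.mpr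
      (le_iSup₂ (f := fun j (_ : j ≤ n) => MeasurableSpace.comap (Y j) inferInstance) k
        (by simp at hk; omega))

  have hIcc0 : ∀ c : ℕ, Finset.Icc 1 c = Finset.Ioc 0 c := fun c => by
    rw [← Finset.Icc_add_one_left_eq_Ioc]; rfl
  -- splitting products
  have hYsplit : ∀ a b ω, a ≤ b → Y b ω = Y a ω * ∏ i ∈ Finset.Icc (a + 1) b, X i ω := by
    intro a b ω hab
    rw [hY, hY, hIcc0, hIcc0, ← Finset.prod_Ioc_consecutive (fun i => X i ω) (Nat.zero_le a) hab,
      Finset.Icc_add_one_left_eq_Ioc]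
  -- expectation of a product of X's over a finset
  have hXint : ∀ (s : Finset ℕ), Integrable (fun ω => ∏ i ∈ s, X i ω) P := by
    intro s
    refine integrable_of_bound ((Finset.measurable_prod _ fun i _ =>
      hXmeas i).aestronglyMeasurable) 1 fun ω => ?_
    rw [Finset.abs_prod, Finset.prod_congr rfl fun k _ => hXabs k ω, Finset.prod_const_one]
  have hEprod : ∀ s : Finset ℕ, ∫ ω, (∏ i ∈ s, X i ω) ∂P = ∏ i ∈ s, (1 - 2 * p i) := by
    intro s
    induction s using Finset.induction with
    | empty => simp
    | @insert k s hk ih =>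
      have hindep : IndepFun (∏ j ∈ s, X j) (X k) P :=
        iIndepFun.indepFun_finsetProd_of_notMem hXindep hXmeas hk
      have h5 : (∏ j ∈ s, X j) = fun ω => ∏ j ∈ s, X j ω := by
        funext ω; simp [Finset.prod_apply]
      have h1 : Integrable (∏ j ∈ s, X j) P := by rw [h5]; exact hXint s
      have h2 := hindep.integral_mul_eq_mul_integral h1.aestronglyMeasurable (integrable_of_bound
        ((hXmeas k).aestronglyMeasurable) 1 fun ω => le_of_eq (hXabs k ω)).aestronglyMeasurable
      have h4 : (fun ω => ∏ i ∈ insert k s, X i ω) = (∏ j ∈ s, X j) * X k := by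
        funext ω; rw [Finset.prod_insert hk, Pi.mul_apply, Finset.prod_apply]; ring
      show ∫ ω, (fun ω => ∏ i ∈ insert k s, X i ω) ω ∂P = _
      rw [h4, h2, Finset.prod_insert hk, hXmean, h5, ih]
      ring

  -- the mixing quantity
  set δ : ℕ → ℕ → ℝ := fun n j => |∏ i ∈ Finset.Icc (n + 1) (n + j), (1 - 2 * p i)| with hδdef
  have hmin_nonneg : ∀ i, 0 ≤ min (p i) (1 - p i) := fun i =>
    le_min (hp i).1 (by linarith [(hp i).2])
  have habs12 : ∀ i, |1 - 2 * p i| = 1 - 2 * min (p i) (1 - p i) := by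
    intro i
    rcases le_total (p i) (1 - p i) with h | h
    · rw [min_eq_left h, abs_of_nonneg (by linarith)]
    · rw [min_eq_right h, abs_of_nonpos (by linarith)]; ring
  have hδle : ∀ n j, δ n j ≤ Real.exp (-2 * ∑ i ∈ Finset.Icc (n + 1) (n + j),
      min (p i) (1 - p i)) := by
    intro n j
    rw [hδdef]
    simp only [Finset.abs_prod]
    calc (∏ i ∈ Finset.Icc (n + 1) (n + j), |1 - 2 * p i|)
        ≤ ∏ i ∈ Finset.Icc (n + 1) (n + j), Real.exp (-(2 * min (p i) (1 - p i))) := by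
          refine Finset.prod_le_prod (fun i _ => abs_nonneg _) fun i _ => ?_
          rw [habs12]
          have := Real.add_one_le_exp (-(2 * min (p i) (1 - p i)))
          linarith
      _ = Real.exp (∑ i ∈ Finset.Icc (n + 1) (n + j), -(2 * min (p i) (1 - p i))) := by
          rw [Real.exp_sum]
      _ = Real.exp (-2 * ∑ i ∈ Finset.Icc (n + 1) (n + j), min (p i) (1 - p i)) := by
          congr 1
          rw [Finset.mul_sum]
          exact Finset.sum_congr rfl fun i _ => by ring
  have hδ0 : ∀ n j, 0 ≤ δ n j := fun n j => abs_nonneg _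
  have hδtendsto : ∀ n, Tendsto (fun j => δ n j) atTop (nhds 0) := by
    intro n
    have hpart : Tendsto (fun k => ∑ i ∈ Finset.range k, min (p i) (1 - p i)) atTop atTop :=
      (not_summable_iff_tendsto_nat_atTop_of_nonneg hmin_nonneg).mp hmix
    have hsum : Tendsto (fun j => ∑ i ∈ Finset.Icc (n + 1) (n + j), min (p i) (1 - p i))
        atTop atTop := by
      have heq : ∀ j, ∑ i ∈ Finset.Icc (n + 1) (n + j), min (p i) (1 - p i) =
          (∑ i ∈ Finset.range (n + j + 1), min (p i) (1 - p i)) -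
          ∑ i ∈ Finset.range (n + 1), min (p i) (1 - p i) := by
        intro j
        rw [← Finset.Ico_add_one_right_eq_Icc, Finset.sum_Ico_eq_sub _ (by omega)]
      have h1 : Tendsto (fun j : ℕ => n + j + 1) atTop atTop := by
        refine tendsto_atTop_atTop.mpr fun b => ⟨b, fun a ha => by omega⟩
      have h2 : Tendsto (fun j : ℕ => ∑ i ∈ Finset.range (n + j + 1), min (p i) (1 - p i))
          atTop atTop := hpart.comp h1
      refine (tendsto_atTop_add_const_right atTop
        (-(∑ i ∈ Finset.range (n + 1), min (p i) (1 - p i))) h2).congr fun j => ?_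
      rw [heq j]; ring
    have h3 : Tendsto (fun j => 2 * ∑ i ∈ Finset.Icc (n + 1) (n + j), min (p i) (1 - p i))
        atTop atTop := hsum.const_mul_atTop (by norm_num)
    have h4 : Tendsto (fun j => -(2 * ∑ i ∈ Finset.Icc (n + 1) (n + j), min (p i) (1 - p i)))
        atTop atBot := tendsto_neg_atBot_iff.mpr h3
    have hexp : Tendsto (fun j => Real.exp (-2 * ∑ i ∈ Finset.Icc (n + 1) (n + j),
        min (p i) (1 - p i))) atTop (nhds 0) := by
      refine (Real.tendsto_exp_atBot.comp h4).congr fun j => ?_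
      rw [Function.comp_apply, neg_mul]
    exact squeeze_zero (fun j => hδ0 n j) (fun j => hδle n j) hexp

  have hmS_mono : ∀ I J : Set ℕ, I ⊆ J → mS I ≤ mS J := fun I J h =>
    iSup₂_le fun i hi =>
      le_iSup₂ (f := fun i (_ : i ∈ J) => MeasurableSpace.comap (X i) inferInstance) i (h hi)
  -- the key conditional expectation bound
  have hgbound : ∀ n j m : ℕ, n + j ≤ m →
      ∀ᵐ ω ∂P, |(P[(fun ω' => sg (S m ω')) | F n]) ω| ≤ δ n j +
        2 * (P[Set.indicator {ω' | |S m ω'| ≤ ((2 * (n + j) : ℕ) : ℝ)}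
          (fun _ => (1 : ℝ)) | F n]) ω := by
    intro n j m hm
    set r := n + j with hr
    set Pf : Ω → ℝ := fun ω => ∏ i ∈ Finset.Icc (n + 1) r, X i ω with hPf
    set Vf : Ω → ℝ := fun ω => ∑ k ∈ Finset.Icc (r + 1) m, ∏ i ∈ Finset.Icc (r + 1) k, X i ω
      with hVf
    set ind : Ω → ℝ := Set.indicator {ω' | |S m ω'| ≤ ((2 * (n + j) : ℕ) : ℝ)}
      (fun _ => (1 : ℝ)) with hind
    have hind_nonneg : ∀ ω, 0 ≤ ind ω := fun ω => by
      rw [hind, Set.indicator_apply]; split_ifs <;> norm_num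
    have hind_le : ∀ ω, ind ω ≤ 1 := fun ω => by
      rw [hind, Set.indicator_apply]; split_ifs <;> norm_num
    have hindmeas : Measurable ind := by
      rw [hind]
      exact Measurable.indicator measurable_const
        (measurableSet_le (hSmeas m).abs measurable_const)
    have hindint : Integrable ind P :=
      integrable_of_bound hindmeas.aestronglyMeasurable 1 fun ω => by
        rw [abs_of_nonneg (hind_nonneg ω)]; exact hind_le ω
    -- decomposition facts
    have hPfabs : ∀ ω, |Pf ω| = 1 := by
      intro ω
      rw [hPf, Finset.abs_prod, Finset.prod_congr rfl fun k _ => hXabs k ω,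
        Finset.prod_const_one]
    have hYr : ∀ ω, Y r ω = Y n ω * Pf ω := fun ω => hYsplit n r ω (by omega)
    have hdecomp : ∀ ω, S m ω = S r ω + Y r ω * Vf ω := by
      intro ω
      rw [hS, hS, hIcc0, hIcc0, ← Finset.sum_Ioc_consecutive (fun k => Y k ω) (Nat.zero_le r) hm]
      congr 1
      rw [hVf, Finset.mul_sum, ← Finset.Icc_add_one_left_eq_Ioc]
      refine Finset.sum_congr rfl fun k hk => ?_
      rw [Finset.mem_Icc] at hk
      exact hYsplit r k ω (by omega)
    -- measurability w.r.t. block σ-algebras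
    have hPfm : Measurable[mS (Set.Ioc n r)] Pf := by
      rw [hPf]
      exact Finset.measurable_prod _ fun i hi => hXmS _ i (by
        rw [Finset.mem_Icc] at hi; exact Set.mem_Ioc.mpr (by omega))
    have hVfsgm : Measurable[mS (Set.Ioi r)] (fun ω => sg (Vf ω)) := by
      refine sg_measurable.comp ?_
      rw [hVf]
      exact Finset.measurable_sum _ fun k hk => Finset.measurable_prod _ fun i hi =>
        hXmS _ i (by rw [Finset.mem_Icc] at hi; exact Set.mem_Ioi.mpr (by omega))
    have hPVm : Measurable[mS (Set.Ioi n)] (fun ω => Pf ω * sg (Vf ω)) := by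
      refine Measurable.mul ?_ ?_
      · exact hPfm.mono (hmS_mono _ _ fun i hi => Set.mem_Ioi.mpr (Set.mem_Ioc.mp hi).1) le_rfl
      · exact hVfsgm.mono (hmS_mono _ _ fun i hi =>
          Set.mem_Ioi.mpr (by have := Set.mem_Ioi.mp hi; omega)) le_rfl
    -- integrability
    have hPVint : Integrable (fun ω => Pf ω * sg (Vf ω)) P := by
      refine integrable_of_bound ((hPVm.mono (hmS_le _) le_rfl).aestronglyMeasurable) 1
        fun ω => ?_
      rw [abs_mul, hPfabs, one_mul]; exact sg_abs_le _
    have hsgSint : Integrable (fun ω' => sg (S m ω')) P :=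
      integrable_of_bound ((sg_measurable.comp (hSmeas m)).aestronglyMeasurable) 1
        fun ω => sg_abs_le _
    -- the constant c and its bound
    set c : ℝ := ∫ ω, Pf ω * sg (Vf ω) ∂P with hc
    have hcabs : |c| ≤ δ n j := by
      have hdisj : Disjoint (Set.Ioc n r) (Set.Ioi r) := by
        rw [Set.disjoint_left]
        intro i hi1 hi2
        exact absurd (Set.mem_Ioi.mp hi2) (not_lt.mpr (Set.mem_Ioc.mp hi1).2)
      have hIF : IndepFun Pf (fun ω => sg (Vf ω)) P :=
        indepFun_of_indep_comap (indep_mono' (hIndepS _ _ hdisj)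
          (measurable_iff_comap_le.mp hPfm) (measurable_iff_comap_le.mp hVfsgm))
      have hsgint : Integrable (fun ω => sg (Vf ω)) P :=
        integrable_of_bound ((hVfsgm.mono (hmS_le _) le_rfl).aestronglyMeasurable) 1
          fun ω => sg_abs_le _
      have hmul := hIF.integral_mul_eq_mul_integral (show Integrable Pf P by rw [hPf]; exact hXint _).aestronglyMeasurable hsgint.aestronglyMeasurable
      have hceq : c = (∫ ω, Pf ω ∂P) * ∫ ω, sg (Vf ω) ∂P := by
        rw [hc]
        simpa [Pi.mul_apply] using hmul
      have h1 : |∫ ω, sg (Vf ω) ∂P| ≤ 1 := by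
        calc |∫ ω, sg (Vf ω) ∂P| ≤ ∫ ω, |sg (Vf ω)| ∂P := by
              simpa [Real.norm_eq_abs] using norm_integral_le_integral_norm fun ω => sg (Vf ω)
          _ ≤ ∫ _, (1 : ℝ) ∂P := integral_mono hsgint.abs (integrable_const 1)
              fun ω => sg_abs_le _
          _ = 1 := by simp
      have h2 : |∫ ω, Pf ω ∂P| = δ n j := by
        rw [hPf, hEprod, hδdef]
      rw [hceq, abs_mul, h2]
      nlinarith [abs_nonneg (∫ ω, Pf ω ∂P), hδ0 n j, abs_nonneg (∫ ω, sg (Vf ω) ∂P)]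
    -- pointwise comparison
    set h : Ω → ℝ := (fun ω => Y n ω) * fun ω => Pf ω * sg (Vf ω) with hh
    have hhint : Integrable h P := by
      refine integrable_of_bound (((hYmeas n).measurable.mul
        (hPVm.mono (hmS_le _) le_rfl)).aestronglyMeasurable) 1 fun ω => ?_
      rw [hh, Pi.mul_apply, abs_mul, hYabs, one_mul, abs_mul, hPfabs, one_mul]
      exact sg_abs_le _
    have hpt : ∀ ω, |sg (S m ω) - h ω| ≤ 2 * ind ω := by
      intro ω
      have hhω : h ω = Y r ω * sg (Vf ω) := by
        rw [hh, Pi.mul_apply, hYr ω]; ring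
      by_cases hw : ((r : ℕ) : ℝ) < |Vf ω|
      · have hsg : sg (S m ω) = h ω := by
          rw [hhω, hdecomp ω]
          rcases hYunit r ω with hyr | hyr
          · rw [hyr, one_mul, one_mul, sg_shift (hSabs r ω) hw]
          · rw [hyr, neg_one_mul, neg_one_mul]
            rw [sg_shift (hSabs r ω) (by rwa [abs_neg]), sg_neg]
        rw [hsg, sub_self, abs_zero]
        have := hind_nonneg ω
        linarith
      · push_neg at hw
        have hSm : |S m ω| ≤ ((2 * (n + j) : ℕ) : ℝ) := by
          rw [hdecomp ω]
          calc |S r ω + Y r ω * Vf ω| ≤ |S r ω| + |Y r ω * Vf ω| := abs_add_le _ _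
            _ ≤ (r : ℝ) + |Vf ω| := by
                rw [abs_mul, hYabs, one_mul]
                exact add_le_add_left (hSabs r ω) _
            _ ≤ (r : ℝ) + (r : ℝ) := add_le_add_right hw _
            _ = ((2 * (n + j) : ℕ) : ℝ) := by rw [hr]; push_cast; ring
        have hind1 : ind ω = 1 := by
          rw [hind, Set.indicator_apply, if_pos]
          exact hSm
        rw [hind1]
        calc |sg (S m ω) - h ω| = |sg (S m ω) + -(h ω)| := by rw [sub_eq_add_neg]
          _ ≤ |sg (S m ω)| + |h ω| := by rw [← abs_neg (h ω)] at *; exact abs_add_le _ _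
          _ ≤ 1 + 1 := by
              refine add_le_add (sg_abs_le _) ?_
              rw [hhω, abs_mul, hYabs, one_mul]
              exact sg_abs_le _
          _ = 2 * 1 := by norm_num
    -- conditional expectation estimates
    have hFle : (F n : MeasurableSpace Ω) ≤ mΩ := F.le n
    have e2 : P[(fun ω => Pf ω * sg (Vf ω)) | F n] =ᵐ[P] fun _ => c := by
      refine condExp_indep_eq (hmS_le (Set.Ioi n)) hFle hPVm.stronglyMeasurable ?_
      refine indep_mono' (hIndepS (Set.Ioi n) (Set.Iic n) ?_) le_rfl (hFleS n)
      rw [Set.disjoint_left]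
      intro i hi1 hi2
      exact absurd (Set.mem_Iic.mp hi2) (not_le.mpr (Set.mem_Ioi.mp hi1))
    have e1 : P[h | F n] =ᵐ[P] (fun ω => Y n ω) * P[(fun ω => Pf ω * sg (Vf ω)) | F n] :=
      condExp_mul_of_stronglyMeasurable_left (hYFn n).stronglyMeasurable hhint hPVint
    have hup : P[(fun ω' => sg (S m ω')) | F n] ≤ᵐ[P] P[h + (2 : ℝ) • ind | F n] := by
      refine condExp_mono hsgSint (hhint.add (hindint.smul (2 : ℝ))) (ae_of_all _ fun ω => ?_)
      have := abs_le.mp (hpt ω)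
      simp only [Pi.add_apply, Pi.smul_apply, smul_eq_mul]
      linarith [this.2]
    have hlo : P[h - (2 : ℝ) • ind | F n] ≤ᵐ[P] P[(fun ω' => sg (S m ω')) | F n] := by
      refine condExp_mono (hhint.sub (hindint.smul (2 : ℝ))) hsgSint (ae_of_all _ fun ω => ?_)
      have := abs_le.mp (hpt ω)
      simp only [Pi.sub_apply, Pi.smul_apply, smul_eq_mul]
      linarith [this.1]
    have hupeq : P[h + (2 : ℝ) • ind | F n] =ᵐ[P] P[h | F n] + (2 : ℝ) • P[ind | F n] := by
      refine (condExp_add hhint (hindint.smul (2 : ℝ)) (F n)).trans ?_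
      filter_upwards [condExp_smul (2 : ℝ) ind (m := F n) (μ := P)] with ω hω
      simp only [Pi.add_apply]
      rw [hω]
    have hloeq : P[h - (2 : ℝ) • ind | F n] =ᵐ[P] P[h | F n] - (2 : ℝ) • P[ind | F n] := by
      refine (condExp_sub hhint (hindint.smul (2 : ℝ)) (F n)).trans ?_
      filter_upwards [condExp_smul (2 : ℝ) ind (m := F n) (μ := P)] with ω hω
      simp only [Pi.sub_apply]
      rw [hω]
    filter_upwards [hup, hlo, hupeq, hloeq, e1, e2] with ω h1 h2 h3 h4 h5 h6
    have h7 : (P[h | F n]) ω = Y n ω * c := by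
      rw [h5, Pi.mul_apply, h6]
    have h8 : (P[(fun ω' => sg (S m ω')) | F n]) ω ≤ Y n ω * c +
        2 * (P[ind | F n]) ω := by
      have := h1.trans_eq h3
      simp only [Pi.add_apply, Pi.smul_apply, smul_eq_mul] at this
      rw [h7] at this
      exact this
    have h9 : Y n ω * c - 2 * (P[ind | F n]) ω ≤ (P[(fun ω' => sg (S m ω')) | F n]) ω := by
      have := h4.symm.trans_le h2
      simp only [Pi.sub_apply, Pi.smul_apply, smul_eq_mul] at this
      rw [h7] at this
      exact this
    have h10 : |Y n ω * c| ≤ δ n j := by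
      rw [abs_mul, hYabs, one_mul]; exact hcabs
    have h11 := abs_le.mp h10
    rw [abs_le]
    exact ⟨by linarith [h9, h11.1], by linarith [h8, h11.2]⟩

  have hsgSmInt : ∀ m, Integrable (fun ω' => sg (S m ω')) P := fun m =>
    integrable_of_bound ((sg_measurable.comp (hSmeas m)).aestronglyMeasurable) 1
      fun ω => sg_abs_le _
  -- the one-sided events have probability zero
  have hOneSided : ∀ ε : ℝ, (ε = 1 ∨ ε = -1) → ∀ t : ℕ,
      P {ω | ∀ m, t ≤ m → 0 < ε * S m ω} = 0 := by
    intro ε hε t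
    have hεabs : |ε| = 1 := by rcases hε with h | h <;> simp [h]
    set D : Set Ω := {ω | ∀ m, t ≤ m → 0 < ε * S m ω} with hDdef
    have hDeq : D = ⋂ m, {ω | t ≤ m → 0 < ε * S m ω} := by
      ext ω; simp [hDdef, Set.mem_iInter]
    have hDsup : MeasurableSet[⨆ n, (F n : MeasurableSpace Ω)] D := by
      rw [hDeq]
      refine MeasurableSet.iInter fun m => ?_
      by_cases hm : t ≤ m
      · have he : {ω | t ≤ m → 0 < ε * S m ω} = {ω | 0 < ε * S m ω} := by
          ext ω; simp [hm]
        rw [he]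
        refine (le_iSup (fun n => (F n : MeasurableSpace Ω)) m) _ ?_
        exact measurableSet_lt (@measurable_const ℝ Ω _ (F m) 0) ((hSFn m).const_mul ε)
      · have he : {ω | t ≤ m → 0 < ε * S m ω} = Set.univ := by
          ext ω; simp [hm]
        rw [he]; exact MeasurableSet.univ
    have hsup_le : (⨆ n, (F n : MeasurableSpace Ω)) ≤ mΩ := iSup_le fun n => F.le n
    have hDmeas : MeasurableSet D := hsup_le _ hDsup
    set indD : Ω → ℝ := Set.indicator D (fun _ => (1 : ℝ)) with hindD
    have hindDint : Integrable indD P := by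
      refine integrable_of_bound ((stronglyMeasurable_const.indicator hDmeas).measurable
        |>.aestronglyMeasurable) 1 fun ω => ?_
      rw [hindD, Set.indicator_apply]; split_ifs <;> norm_num
    have hindDsm : StronglyMeasurable[⨆ n, (F n : MeasurableSpace Ω)] indD :=
      stronglyMeasurable_const.indicator hDsup
    have hlevy : ∀ᵐ ω ∂P, Tendsto (fun n => (P[indD | F n]) ω) atTop (nhds (indD ω)) :=
      hindDint.tendsto_ae_condExp hindDsm
    -- per-n bound on the conditional probability of D
    have hpern : ∀ n : ℕ, ∀ᵐ ω ∂P, (P[indD | F n]) ω ≤ 1 / 2 := by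
      intro n
      -- comparison with sign conditional expectations, per m ≥ t
      have hcmp : ∀ m : ℕ, t ≤ m → ∀ᵐ ω ∂P, (P[indD | F n]) ω ≤
          (1 + ε * (P[(fun ω' => sg (S m ω')) | F n]) ω) / 2 := by
        intro m hm
        have hptD : ∀ ω, indD ω ≤ (1 + ε * sg (S m ω)) / 2 := by
          intro ω
          rw [hindD, Set.indicator_apply]
          split_ifs with hmem
          · have hpos : 0 < ε * S m ω := hmem m hm
            rcases hε with he | he
            · subst he
              rw [one_mul] at hpos ⊢
              rw [sg_of_pos hpos]
              norm_num
            · subst he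
              have hneg : S m ω < 0 := by nlinarith [hpos]
              rw [sg_of_neg hneg]
              norm_num
          · have h1 : |ε * sg (S m ω)| ≤ 1 := by
              rw [abs_mul, hεabs, one_mul]; exact sg_abs_le _
            have := abs_le.mp h1
            linarith [this.1]
        have hεsgint : Integrable (fun ω' => (1 + ε * sg (S m ω')) / 2) P := by
          refine integrable_of_bound (((measurable_const.add
            ((sg_measurable.comp (hSmeas m)).const_mul ε)).div_const 2).aestronglyMeasurable)
            1 fun ω => ?_
          have h1 : |ε * sg (S m ω)| ≤ 1 := by
            rw [abs_mul, hεabs, one_mul]; exact sg_abs_le _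
          have h2 := abs_le.mp h1
          rw [abs_div, abs_of_nonneg (by linarith [h2.1] : (0:ℝ) ≤ 1 + ε * sg (S m ω)),
            abs_of_pos (by norm_num : (0:ℝ) < 2)]
          linarith [h2.2]
        have hmono := condExp_mono (μ := P) (m := F n) hindDint hεsgint
          (ae_of_all _ hptD)
        have haff : P[(fun ω' => (1 + ε * sg (S m ω')) / 2) | F n] =ᵐ[P]
            fun ω => (1 + ε * (P[(fun ω' => sg (S m ω')) | F n]) ω) / 2 := by
          have he : (fun ω' => (1 + ε * sg (S m ω')) / 2) =
              (2⁻¹ : ℝ) • ((fun _ => (1 : ℝ)) + ε • (fun ω' => sg (S m ω'))) := by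
            funext ω'
            simp only [Pi.smul_apply, Pi.add_apply, smul_eq_mul]
            ring
          rw [he]
          refine (condExp_smul (2⁻¹ : ℝ) _ (m := F n)).trans ?_
          have h0 : (P[(fun _ : Ω => (1 : ℝ)) | F n]) = fun _ => (1 : ℝ) :=
            condExp_const (F.le n) 1
          filter_upwards [condExp_add (μ := P) (m := F n) (integrable_const (1 : ℝ))
            ((hsgSmInt m).smul ε),
            condExp_smul (μ := P) (m := F n) ε (fun ω' => sg (S m ω'))] with ω h1 h2
          simp only [Pi.smul_apply, smul_eq_mul] at h2 ⊢
          rw [h1, Pi.add_apply, h2]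
          simp only [h0]
          ring
        filter_upwards [hmono, haff] with ω h1 h2
        exact le_of_le_of_eq h1 h2
      have hball : ∀ᵐ ω ∂P, ∀ j m : ℕ, n + j ≤ m →
          |(P[(fun ω' => sg (S m ω')) | F n]) ω| ≤ δ n j +
            2 * (P[Set.indicator {ω' | |S m ω'| ≤ ((2 * (n + j) : ℕ) : ℝ)}
              (fun _ => (1 : ℝ)) | F n]) ω := by
        rw [ae_all_iff]
        intro j
        rw [ae_all_iff]
        intro m
        by_cases hc : n + j ≤ m
        · exact (hgbound n j m hc).mono fun ω h _ => h
        · exact ae_of_all _ fun ω h => absurd h hc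
      have hsprd : ∀ᵐ ω ∂P, ∀ j : ℕ,
          Tendsto (fun m => (P[Set.indicator {ω' | |S m ω'| ≤ ((2 * (n + j) : ℕ) : ℝ)}
            (fun _ => (1 : ℝ)) | F n]) ω) atTop (nhds 0) :=
        ae_all_iff.mpr fun j => hspread n (2 * (n + j))
      have hcmp' : ∀ᵐ ω ∂P, ∀ m : ℕ, t ≤ m → (P[indD | F n]) ω ≤
          (1 + ε * (P[(fun ω' => sg (S m ω')) | F n]) ω) / 2 := by
        rw [ae_all_iff]
        intro m
        by_cases hc : t ≤ m
        · exact (hcmp m hc).mono fun ω h _ => h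
        · exact ae_of_all _ fun ω h => absurd h hc
      filter_upwards [hball, hsprd, hcmp'] with ω hb hs hc
      have key : ∀ j : ℕ, (P[indD | F n]) ω ≤ (1 + δ n j) / 2 := by
        intro j
        have hbound : ∀ᶠ m in atTop, (P[indD | F n]) ω ≤
            (1 + (δ n j + 2 * (P[Set.indicator {ω' | |S m ω'| ≤ ((2 * (n + j) : ℕ) : ℝ)}
              (fun _ => (1 : ℝ)) | F n]) ω)) / 2 := by
          rw [eventually_atTop]
          refine ⟨max t (n + j), fun m hm => ?_⟩
          have h1 := hc m (le_trans (le_max_left _ _) hm)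
          have h2 := hb j m (le_trans (le_max_right _ _) hm)
          have h3 : ε * (P[(fun ω' => sg (S m ω')) | F n]) ω ≤
              |(P[(fun ω' => sg (S m ω')) | F n]) ω| := by
            calc ε * (P[(fun ω' => sg (S m ω')) | F n]) ω
                ≤ |ε * (P[(fun ω' => sg (S m ω')) | F n]) ω| := le_abs_self _
              _ = |(P[(fun ω' => sg (S m ω')) | F n]) ω| := by
                  rw [abs_mul, hεabs, one_mul]
          linarith
        have hlim : Tendsto (fun m => (1 + (δ n j + 2 *
            (P[Set.indicator {ω' | |S m ω'| ≤ ((2 * (n + j) : ℕ) : ℝ)}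
              (fun _ => (1 : ℝ)) | F n]) ω)) / 2) atTop (nhds ((1 + (δ n j + 2 * 0)) / 2)) := by
          exact ((((hs j).const_mul 2).const_add (δ n j)).const_add 1).div_const 2
        have := ge_of_tendsto hlim hbound
        simpa using this
      have hlim2 : Tendsto (fun j => (1 + δ n j) / 2) atTop (nhds ((1 + 0) / 2)) :=
        ((hδtendsto n).const_add 1).div_const 2
      have := ge_of_tendsto hlim2 (Eventually.of_forall key)
      simpa using this
    have hle : ∀ᵐ ω ∂P, indD ω ≤ 1 / 2 := by
      filter_upwards [hlevy, ae_all_iff.mpr hpern] with ω h1 h2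
      exact le_of_tendsto h1 (Eventually.of_forall h2)
    have hnot : ∀ᵐ ω ∂P, ω ∉ D := by
      filter_upwards [hle] with ω h hmem
      rw [hindD, Set.indicator_of_mem hmem] at h
      norm_num at h
    exact measure_eq_zero_iff_ae_notMem.mpr hnot

  -- endgame: path argument
  set U : Set Ω := ⋃ t : ℕ, ({ω | ∀ m, t ≤ m → 0 < (1 : ℝ) * S m ω} ∪
    {ω | ∀ m, t ≤ m → 0 < (-1 : ℝ) * S m ω}) with hU
  have hUnull : P U = 0 := by
    rw [hU]
    refine measure_iUnion_null fun t => measure_union_null ?_ ?_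
    · exact hOneSided 1 (Or.inl rfl) t
    · exact hOneSided (-1) (Or.inr rfl) t
  have hsub : {ω | ∃ᶠ n in atTop, S n ω = 0}ᶜ ⊆ U := by
    intro ω hω
    simp only [Set.mem_compl_iff, Set.mem_setOf_eq, Filter.not_frequently] at hω
    rw [eventually_atTop] at hω
    obtain ⟨t, ht⟩ := hω
    have hne : ∀ m, t ≤ m → S m ω ≠ 0 := ht
    have hone : ∀ x : ℝ, (∃ z : ℤ, x = (z : ℝ)) → 0 < x → 1 ≤ x := by
      rintro x ⟨z, rfl⟩ hx
      have hz : 0 < z := by exact_mod_cast hx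
      have hz1 : 1 ≤ z := by omega
      exact_mod_cast hz1
    have honeneg : ∀ x : ℝ, (∃ z : ℤ, x = (z : ℝ)) → x < 0 → x ≤ -1 := by
      rintro x ⟨z, rfl⟩ hx
      have hz : z < 0 := by exact_mod_cast hx
      have hz1 : z ≤ -1 := by omega
      exact_mod_cast hz1
    rcases lt_trichotomy (S t ω) 0 with hst | hst | hst
    · -- stays negative
      have hmain : ∀ m, t ≤ m → S m ω < 0 := by
        intro m hm
        induction m, hm using Nat.le_induction with
        | base => exact hst
        | succ m hm ih =>
          have h1 : S m ω ≤ -1 := honeneg _ (hSint m ω) ih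
          have h2 : S (m + 1) ω ≤ 0 := by
            have h3 := hSstep m ω
            rcases hYunit (m + 1) ω with hy | hy <;> rw [h3, hy] <;> linarith
          exact lt_of_le_of_ne h2 (hne (m + 1) (by omega))
      refine Set.mem_iUnion.mpr ⟨t, Or.inr fun m hm => ?_⟩
      have := hmain m hm
      linarith
    · exact absurd hst (hne t le_rfl)
    · -- stays positive
      have hmain : ∀ m, t ≤ m → 0 < S m ω := by
        intro m hm
        induction m, hm using Nat.le_induction with
        | base => exact hst
        | succ m hm ih =>
          have h1 : 1 ≤ S m ω := hone _ (hSint m ω) ih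
          have h2 : 0 ≤ S (m + 1) ω := by
            have h3 := hSstep m ω
            rcases hYunit (m + 1) ω with hy | hy <;> rw [h3, hy] <;> linarith
          exact lt_of_le_of_ne h2 (Ne.symm (hne (m + 1) (by omega)))
      refine Set.mem_iUnion.mpr ⟨t, Or.inl fun m hm => ?_⟩
      have := hmain m hm
      linarith
  have hmeasFreq : MeasurableSet {ω | ∃ᶠ n in atTop, S n ω = 0} := by
    have he : {ω | ∃ᶠ n in atTop, S n ω = 0} =
        ⋂ t : ℕ, ⋃ m : ℕ, ⋃ _ : t ≤ m, {ω | S m ω = 0} := by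
      ext ω
      simp only [Set.mem_setOf_eq, Set.mem_iInter, Set.mem_iUnion]
      rw [frequently_atTop]
      constructor
      · intro h t
        obtain ⟨m, hm, h0⟩ := h t
        exact ⟨m, hm, h0⟩
      · intro h t
        obtain ⟨m, hm, h0⟩ := h t
        exact ⟨m, hm, h0⟩
    rw [he]
    refine MeasurableSet.iInter fun t => MeasurableSet.iUnion fun m =>
      MeasurableSet.iUnion fun _ => ?_
    exact hSmeas m (measurableSet_singleton 0)
  rw [← prob_compl_eq_zero_iff hmeasFreq]
  exact measure_mono_null hsub hUnull
end
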